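/- (Rank Lemma for adding the first row.) Let w ∈ S_{n-1} with associated vector (r_1, ..., r_{n-1}), let A_w be the associated 0-pattern matrix with generic nonzero entries, let S ⊆ {2, ..., n}, and set S^+ = {1} ∪ S. Then rk((A_w)_{S^+, j}) = rk((A_w)_{S, j}) if j ≤ r_1 - 1; rk((A_w)_{S^+, r_1}) = rk((A_w)_{S, r_1 - 1}) + 1; and rk((A_w)_{S^+, j}) = rk((A_w)_{S, j}) + 1 if j ≥ r_1 + 1. -/

import Mathlib

/-- `rvecS w j`: the rank of `w⁻¹ j` counted from the smallest among
`w⁻¹ j, ..., w⁻¹ (m-1)` (0-based indexing); this is the convention under which the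
first row of `A_w` has its stars in columns `r_1` and `r_1 + 1` (1-based). -/
def rvecS {m : ℕ} (w : Equiv.Perm (Fin m)) (j : Fin m) : ℕ :=
  (Finset.univ.filter (fun k : Fin m => j ≤ k ∧ w⁻¹ k ≤ w⁻¹ j)).card

/-- The column (0-based) of the distinguished entry `⋆₂` in row `i` of `A_w`:
column `w⁻¹(i) + 1` (1-based) for `i ≤ n - 1`, and column `1` for the last row. -/
def star2 {m : ℕ} (w : Equiv.Perm (Fin m)) (i : Fin (m + 1)) : Fin (m + 1) :=
  if h : (i : ℕ) < m then Fin.succ (w⁻¹ ⟨(i : ℕ), h⟩) else 0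

/-- The column (0-based) of the entry `⋆₁` in row `i` of `A_w`: the rightmost column
to the left of the `⋆₂`-column of row `i` containing no `⋆₂` in any earlier row. -/
def star1col {m : ℕ} (w : Equiv.Perm (Fin m)) (i : Fin (m + 1)) : ℕ :=
  ((Finset.range (star2 w i : ℕ)).filter
    (fun c => ∀ i' : Fin (m + 1), i' < i → (star2 w i' : ℕ) ≠ c)).sup id

/-- The support (pattern of possibly-nonzero entries) of the matrix `A_w`. -/
def AwSupp {m : ℕ} (w : Equiv.Perm (Fin m)) (i c : Fin (m + 1)) : Prop :=
  c = star2 w i ∨ ((i : ℕ) < m ∧ (c : ℕ) = star1col w i)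

/-- The rank of the submatrix of `A` on rows `S` and the first `j` columns. -/
noncomputable def rkSub {n : ℕ} (A : Matrix (Fin n) (Fin n) ℂ) (S : Finset (Fin n))
    (j : ℕ) : ℕ :=
  (Matrix.of (fun (i : {i : Fin n // i ∈ S}) (k : {k : Fin n // (k : ℕ) < j}) =>
    A i.1 k.1)).rank

open Module Submodule Matrix

section LinAlg

variable {ι κ : Type*} [Fintype ι] [Fintype κ] [DecidableEq ι] [DecidableEq κ]

private lemma span_cols_submatrix (B : Matrix ι κ ℂ) (i₀ : ι) :
    Submodule.span ℂ (Set.range (B.submatrix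
        (fun i : {i : ι // i ≠ i₀} => (i : ι)) (id : κ → κ))ᵀ)
      = Submodule.map (LinearMap.funLeft ℂ ℂ (Subtype.val : {i : ι // i ≠ i₀} → ι))
          (Submodule.span ℂ (Set.range Bᵀ)) := by
  have h1 : (B.submatrix (fun i : {i : ι // i ≠ i₀} => (i : ι)) (id : κ → κ))ᵀ
      = (LinearMap.funLeft ℂ ℂ (Subtype.val : {i : ι // i ≠ i₀} → ι)) ∘ Bᵀ := rfl
  rw [h1, ← Submodule.span_image]
  congr 1
  exact Set.range_comp _ _

private lemma rank_rows_aux (B : Matrix ι κ ℂ) (i₀ : ι) :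
    (B.submatrix (fun i : {i : ι // i ≠ i₀} => (i : ι)) (id : κ → κ)).rank
      + finrank ℂ (LinearMap.ker ((LinearMap.funLeft ℂ ℂ
          (Subtype.val : {i : ι // i ≠ i₀} → ι)).comp
          (Submodule.span ℂ (Set.range Bᵀ)).subtype)) = B.rank := by
  rw [Matrix.rank_eq_finrank_span_cols, Matrix.rank_eq_finrank_span_cols,
    show (B.submatrix (fun i : {i : ι // i ≠ i₀} => (i : ι)) (id : κ → κ)).col
      = (B.submatrix (fun i : {i : ι // i ≠ i₀} => (i : ι)) (id : κ → κ))ᵀ from rfl,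
    show B.col = Bᵀ from rfl, span_cols_submatrix]
  have h := LinearMap.finrank_range_add_finrank_ker
    ((LinearMap.funLeft ℂ ℂ (Subtype.val : {i : ι // i ≠ i₀} → ι)).comp
      (Submodule.span ℂ (Set.range Bᵀ)).subtype)
  rwa [LinearMap.range_comp, Submodule.range_subtype] at h

/-- Deleting a zero row does not change the rank. -/
private lemma rank_drop_zero_row (B : Matrix ι κ ℂ) (i₀ : ι)
    (h : ∀ c, B i₀ c = 0) :
    (B.submatrix (fun i : {i : ι // i ≠ i₀} => (i : ι)) (id : κ → κ)).rank = B.rank := by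
  have hker : LinearMap.ker ((LinearMap.funLeft ℂ ℂ
      (Subtype.val : {i : ι // i ≠ i₀} → ι)).comp
      (Submodule.span ℂ (Set.range Bᵀ)).subtype) = ⊥ := by
    rw [eq_bot_iff]
    rintro ⟨v, hv⟩ hx
    have hv0 : v i₀ = 0 := by
      have hle : Submodule.span ℂ (Set.range Bᵀ) ≤ LinearMap.ker (LinearMap.proj i₀) := by
        rw [Submodule.span_le]
        rintro _ ⟨c, rfl⟩
        simp only [SetLike.mem_coe, LinearMap.mem_ker, LinearMap.proj_apply]
        exact h c
      exact hle hv
    have hx' : ∀ i : {i : ι // i ≠ i₀}, v (i : ι) = 0 := by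
      intro i
      have h2 : (LinearMap.funLeft ℂ ℂ (Subtype.val : {i : ι // i ≠ i₀} → ι)) v = 0 := hx
      exact congrFun h2 i
    have hv' : v = 0 := by
      funext i
      by_cases hi : i = i₀
      · subst hi; exact hv0
      · exact hx' ⟨i, hi⟩
    simp only [Submodule.mem_bot, Submodule.mk_eq_zero]
    exact hv'
  rw [← rank_rows_aux B i₀, hker, finrank_bot, add_zero]

/-- Deleting the row of a pivot whose column is zero elsewhere drops the rank by one. -/
private lemma rank_drop_pivot_row (B : Matrix ι κ ℂ) (i₀ : ι) (c₀ : κ)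
    (h0 : B i₀ c₀ ≠ 0) (h : ∀ i, i ≠ i₀ → B i c₀ = 0) :
    B.rank = (B.submatrix (fun i : {i : ι // i ≠ i₀} => (i : ι)) (id : κ → κ)).rank + 1 := by
  have hu : Bᵀ c₀ ∈ Submodule.span ℂ (Set.range Bᵀ) :=
    Submodule.subset_span (Set.mem_range_self c₀)
  set u : ↥(Submodule.span ℂ (Set.range Bᵀ)) := ⟨Bᵀ c₀, hu⟩ with hudef
  have hune : u ≠ 0 := by
    intro hc
    apply h0
    have : (u : ι → ℂ) = 0 := by rw [hc]; rfl
    exact congrFun this i₀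
  have hker : LinearMap.ker ((LinearMap.funLeft ℂ ℂ
      (Subtype.val : {i : ι // i ≠ i₀} → ι)).comp
      (Submodule.span ℂ (Set.range Bᵀ)).subtype) = ℂ ∙ u := by
    apply le_antisymm
    · rintro ⟨v, hv⟩ hx
      have hx' : ∀ i : {i : ι // i ≠ i₀}, v (i : ι) = 0 := by
        intro i
        have h2 : (LinearMap.funLeft ℂ ℂ (Subtype.val : {i : ι // i ≠ i₀} → ι)) v = 0 := hx
        exact congrFun h2 i
      rw [Submodule.mem_span_singleton]
      refine ⟨v i₀ / B i₀ c₀, ?_⟩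
      apply Subtype.ext
      show (v i₀ / B i₀ c₀) • (Bᵀ c₀) = v
      funext i
      by_cases hi : i = i₀
      · subst hi
        show (v i / B i c₀) * B i c₀ = v i
        exact div_mul_cancel₀ _ h0
      · show (v i₀ / B i₀ c₀) * B i c₀ = v i
        rw [h i hi, hx' ⟨i, hi⟩, mul_zero]
    · rw [Submodule.span_singleton_le_iff_mem, LinearMap.mem_ker]
      funext i
      show B (i : ι) c₀ = 0
      exact h _ i.2
  have haux := rank_rows_aux B i₀
  rw [hker, finrank_span_singleton hune] at haux
  omega

/-- Deleting a zero column does not change the rank. -/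
private lemma rank_drop_zero_col (B : Matrix ι κ ℂ) (c₀ : κ)
    (h : ∀ i, B i c₀ = 0) :
    (B.submatrix (id : ι → ι) (fun c : {c : κ // c ≠ c₀} => (c : κ))).rank = B.rank := by
  rw [← Matrix.rank_transpose B,
    ← Matrix.rank_transpose (B.submatrix (id : ι → ι) (fun c : {c : κ // c ≠ c₀} => (c : κ)))]
  exact rank_drop_zero_row Bᵀ c₀ h

/-- Deleting the column of a pivot whose row is zero elsewhere drops the rank by one. -/
private lemma rank_drop_pivot_col (B : Matrix ι κ ℂ) (i₀ : ι) (c₀ : κ)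
    (h0 : B i₀ c₀ ≠ 0) (h : ∀ c, c ≠ c₀ → B i₀ c = 0) :
    B.rank = (B.submatrix (id : ι → ι) (fun c : {c : κ // c ≠ c₀} => (c : κ))).rank + 1 := by
  rw [← Matrix.rank_transpose B,
    ← Matrix.rank_transpose (B.submatrix (id : ι → ι) (fun c : {c : κ // c ≠ c₀} => (c : κ)))]
  exact rank_drop_pivot_row Bᵀ c₀ i₀ h0 h

/-- Rank is invariant under reindexing by equivalences (rectangular version). -/
private lemma rank_submatrix_equiv {ι' κ' : Type*} [Fintype ι'] [Fintype κ']
    (B : Matrix ι κ ℂ) (e₁ : ι' ≃ ι) (e₂ : κ' ≃ κ) :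
    (B.submatrix e₁ e₂).rank = B.rank := by
  rw [Matrix.rank_eq_finrank_span_cols, Matrix.rank_eq_finrank_span_cols]
  have h1 : (B.submatrix e₁ e₂).col
      = ((LinearEquiv.funCongrLeft ℂ ℂ e₁ : (ι → ℂ) →ₗ[ℂ] (ι' → ℂ)) ∘ B.col) ∘ e₂ := rfl
  rw [h1, Function.Surjective.range_comp e₂.surjective, Set.range_comp,
    Submodule.span_image]
  exact LinearEquiv.finrank_map_eq _ _

end LinAlg

/-- Rank lemma for adding the first row: for `S ⊆ {2, …, n}` and `S⁺ = {1} ∪ S`,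
the ranks of `(A_w)_{S⁺, j}` and `(A_w)_{S, j}` compare as stated, where
`r_1 = rvecS w 0`. -/
theorem stmt11 (m : ℕ) (hm : 0 < m) (w : Equiv.Perm (Fin m))
    (A : Matrix (Fin (m + 1)) (Fin (m + 1)) ℂ)
    (hA : ∀ i c, A i c ≠ 0 ↔ AwSupp w i c)
    (S : Finset (Fin (m + 1))) (hS : (0 : Fin (m + 1)) ∉ S) :
    (∀ j, j + 1 ≤ rvecS w ⟨0, hm⟩ →
        rkSub A (insert 0 S) j = rkSub A S j) ∧
    rkSub A (insert 0 S) (rvecS w ⟨0, hm⟩) =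
      rkSub A S (rvecS w ⟨0, hm⟩ - 1) + 1 ∧
    (∀ j, rvecS w ⟨0, hm⟩ + 1 ≤ j →
        rkSub A (insert 0 S) j = rkSub A S j + 1) := by
  classical
  set t : Fin m := w⁻¹ ⟨0, hm⟩ with ht
  have htm : (t : ℕ) < m := t.isLt
  -- the value of r₁
  have hr : rvecS w ⟨0, hm⟩ = (t : ℕ) + 1 := by
    unfold rvecS
    have h1 : ∀ k : Fin m, ((⟨0, hm⟩ : Fin m) ≤ k ∧ w⁻¹ k ≤ w⁻¹ ⟨0, hm⟩)
        ↔ w⁻¹ k ≤ w⁻¹ ⟨0, hm⟩ :=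
      fun k => ⟨fun h => h.2, fun h => ⟨Fin.le_def.mpr (Nat.zero_le _), h⟩⟩
    simp only [h1]
    rw [Finset.card_equiv (w⁻¹ : Fin m ≃ Fin m)
      (t := Finset.Iic (w⁻¹ ⟨0, hm⟩)) (fun k => by simp [Finset.mem_Iic])]
    rw [Fin.card_Iic]
  -- key columns
  have htm1 : (t : ℕ) < m + 1 := by omega
  have htm1' : (t : ℕ) + 1 < m + 1 := by omega
  set cT : Fin (m + 1) := ⟨(t : ℕ), htm1⟩ with hcT
  set cT1 : Fin (m + 1) := ⟨(t : ℕ) + 1, htm1'⟩ with hcT1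
  have h0m : ((0 : Fin (m + 1)) : ℕ) < m := by simpa using hm
  -- star2 at row 0
  have hs2 : star2 w 0 = cT1 := by
    unfold star2
    rw [dif_pos h0m]
    have h2 : (⟨((0 : Fin (m + 1)) : ℕ), h0m⟩ : Fin m) = ⟨0, hm⟩ := by
      apply Fin.ext; simp
    rw [h2, ← ht]
    apply Fin.ext
    simp [Fin.val_succ, hcT1]
  -- star1col at row 0
  have hs1 : star1col w 0 = (t : ℕ) := by
    unfold star1col
    rw [hs2]
    have hv : ((cT1 : Fin (m + 1)) : ℕ) = (t : ℕ) + 1 := rfl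
    rw [hv]
    have hfe : (Finset.range ((t : ℕ) + 1)).filter
        (fun c => ∀ i' : Fin (m + 1), i' < 0 → (star2 w i' : ℕ) ≠ c)
        = Finset.range ((t : ℕ) + 1) := by
      apply Finset.filter_true_of_mem
      intro c _ i' hi'
      exact absurd hi' (by simp [Fin.lt_def])
    rw [hfe]
    apply le_antisymm
    · apply Finset.sup_le
      intro c hc
      have := Finset.mem_range.1 hc
      simpa using Nat.lt_succ_iff.1 this
    · exact Finset.le_sup (f := id) (Finset.mem_range.2 (Nat.lt_succ_self _))
  -- entries of row 0
  have hA0 : ∀ c : Fin (m + 1), (c : ℕ) ≠ (t : ℕ) → (c : ℕ) ≠ (t : ℕ) + 1 → A 0 c = 0 := by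
    intro c hc1 hc2
    by_contra hne
    rcases (hA 0 c).1 hne with h | ⟨_, h⟩
    · rw [hs2] at h
      exact hc2 (by simpa using congrArg Fin.val h)
    · rw [hs1] at h
      exact hc1 h
  have hA0t : A 0 cT ≠ 0 := (hA 0 cT).2 (Or.inr ⟨h0m, by rw [hs1]⟩)
  have hA0t1 : A 0 cT1 ≠ 0 := (hA 0 cT1).2 (Or.inl hs2.symm)
  -- column cT1 vanishes outside row 0
  have hAct1 : ∀ i : Fin (m + 1), i ≠ 0 → A i cT1 = 0 := by
    intro i hi
    by_contra hne
    rcases (hA i cT1).1 hne with h | ⟨him, h⟩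
    · unfold star2 at h
      by_cases hlt : (i : ℕ) < m
      · rw [dif_pos hlt] at h
        have hv : (t : ℕ) + 1 = ((w⁻¹ ⟨(i : ℕ), hlt⟩ : Fin m) : ℕ) + 1 := by
          simpa [Fin.val_succ, hcT1] using congrArg Fin.val h
        have heq : w⁻¹ ⟨(i : ℕ), hlt⟩ = w⁻¹ ⟨0, hm⟩ := by
          rw [← ht]
          apply Fin.ext
          omega
        have := (w⁻¹ : Equiv.Perm (Fin m)).injective heq
        apply hi
        apply Fin.ext
        simpa using congrArg Fin.val this
      · rw [dif_neg hlt] at h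
        have := congrArg Fin.val h
        simp only [Fin.val_zero] at this
        have hv : ((cT1 : Fin (m + 1)) : ℕ) = (t : ℕ) + 1 := rfl
        omega
    · -- cT1.val = star1col w i, impossible
      have h' : (t : ℕ) + 1 = star1col w i := h
      have hi0 : (0 : Fin (m + 1)) < i := (Fin.pos_iff_ne_zero' i).2 hi
      unfold star1col at h'
      have hnm : ((t : ℕ) + 1) ∉ (Finset.range ((star2 w i : Fin (m + 1)) : ℕ)).filter
          (fun c => ∀ i' : Fin (m + 1), i' < i → ((star2 w i' : Fin (m + 1)) : ℕ) ≠ c) := by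
        intro hmem
        exact (Finset.mem_filter.1 hmem).2 0 hi0 (by rw [hs2])
      rcases Finset.eq_empty_or_nonempty ((Finset.range ((star2 w i : Fin (m + 1)) : ℕ)).filter
          (fun c => ∀ i' : Fin (m + 1), i' < i → ((star2 w i' : Fin (m + 1)) : ℕ) ≠ c))
        with hF | hF
      · rw [hF, Finset.sup_empty] at h'
        simp at h'
      · obtain ⟨b, hb, hbe⟩ := Finset.exists_mem_eq_sup _ hF id
        rw [hbe] at h'
        apply hnm
        rw [h']
        exact hb
  -- row indices
  have h0S : (0 : Fin (m + 1)) ∈ insert 0 S := Finset.mem_insert_self _ _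
  set i₀ : {i : Fin (m + 1) // i ∈ insert 0 S} := ⟨0, h0S⟩ with hi₀
  -- the row equivalence
  let eRow : {i : Fin (m + 1) // i ∈ S}
      ≃ {i : {i : Fin (m + 1) // i ∈ insert 0 S} // i ≠ i₀} :=
    { toFun := fun i => ⟨⟨i.1, Finset.mem_insert_of_mem i.2⟩, fun hc => hS (by
        have h' : i.1 = 0 := congrArg Subtype.val hc
        rw [← h']
        exact i.2)⟩
      invFun := fun i' => ⟨i'.1.1, by
        rcases Finset.mem_insert.1 i'.1.2 with h | h
        · exact absurd (Subtype.ext h) i'.2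
        · exact h⟩
      left_inv := fun i => rfl
      right_inv := fun i' => rfl }
  -- deleting row 0 from a first-columns submatrix gives the S-submatrix
  have hrow : ∀ j : ℕ,
      ((Matrix.of (fun (i : {i : Fin (m + 1) // i ∈ insert 0 S})
          (k : {k : Fin (m + 1) // (k : ℕ) < j}) => A i.1 k.1)).submatrix
        (fun i : {i : {i : Fin (m + 1) // i ∈ insert 0 S} // i ≠ i₀} =>
          (i : {i : Fin (m + 1) // i ∈ insert 0 S}))
        (id : {k : Fin (m + 1) // (k : ℕ) < j} → {k : Fin (m + 1) // (k : ℕ) < j})).rank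
      = rkSub A S j := by
    intro j
    have h := rank_submatrix_equiv
      ((Matrix.of (fun (i : {i : Fin (m + 1) // i ∈ insert 0 S})
          (k : {k : Fin (m + 1) // (k : ℕ) < j}) => A i.1 k.1)).submatrix
        (fun i : {i : {i : Fin (m + 1) // i ∈ insert 0 S} // i ≠ i₀} =>
          (i : {i : Fin (m + 1) // i ∈ insert 0 S}))
        (id : {k : Fin (m + 1) // (k : ℕ) < j} → {k : Fin (m + 1) // (k : ℕ) < j}))
      eRow (Equiv.refl {k : Fin (m + 1) // (k : ℕ) < j})
    exact h.symm.trans rfl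
  refine ⟨?_, ?_, ?_⟩
  · -- j + 1 ≤ r₁
    intro j hj
    rw [hr] at hj
    have hz : ∀ c : {k : Fin (m + 1) // (k : ℕ) < j},
        (Matrix.of (fun (i : {i : Fin (m + 1) // i ∈ insert 0 S})
          (k : {k : Fin (m + 1) // (k : ℕ) < j}) => A i.1 k.1)) i₀ c = 0 := by
      intro c
      have hc := c.2
      exact hA0 c.1 (by omega) (by omega)
    exact ((rank_drop_zero_row _ i₀ hz).symm.trans (hrow j) : _)
  · -- j = r₁
    rw [hr, Nat.add_sub_cancel]
    have hcp : (cT : ℕ) < (t : ℕ) + 1 := by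
      show (t : ℕ) < (t : ℕ) + 1
      omega
    set cp : {k : Fin (m + 1) // (k : ℕ) < (t : ℕ) + 1} := ⟨cT, hcp⟩ with hcpdef
    set B := Matrix.of (fun (i : {i : Fin (m + 1) // i ∈ insert 0 S})
      (k : {k : Fin (m + 1) // (k : ℕ) < (t : ℕ) + 1}) => A i.1 k.1) with hBdef
    have h0 : B i₀ cp ≠ 0 := hA0t
    have hcne : ∀ c : {k : Fin (m + 1) // (k : ℕ) < (t : ℕ) + 1},
        c ≠ cp → (c.1 : ℕ) ≠ (t : ℕ) := by
      intro c hc h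
      exact hc (Subtype.ext (Fin.ext h))
    have hrow0 : ∀ c : {k : Fin (m + 1) // (k : ℕ) < (t : ℕ) + 1},
        c ≠ cp → B i₀ c = 0 := by
      intro c hc
      have h1 := c.2
      exact hA0 c.1 (hcne c hc) (by omega)
    have k1 := rank_drop_pivot_col B i₀ cp h0 hrow0
    have hz₁ : ∀ c : {c : {k : Fin (m + 1) // (k : ℕ) < (t : ℕ) + 1} // c ≠ cp},
        (B.submatrix (id : _ → _)
          (fun c : {c : {k : Fin (m + 1) // (k : ℕ) < (t : ℕ) + 1} // c ≠ cp} =>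
            (c : {k : Fin (m + 1) // (k : ℕ) < (t : ℕ) + 1}))) i₀ c = 0 := by
      intro c
      have h1 := c.1.2
      exact hA0 c.1.1 (hcne c.1 c.2) (by omega)
    have k2 := rank_drop_zero_row (B.submatrix (id : _ → _)
      (fun c : {c : {k : Fin (m + 1) // (k : ℕ) < (t : ℕ) + 1} // c ≠ cp} =>
        (c : {k : Fin (m + 1) // (k : ℕ) < (t : ℕ) + 1}))) i₀ hz₁
    -- column equivalence
    let eCol2 : {k : Fin (m + 1) // (k : ℕ) < (t : ℕ)}
        ≃ {c : {k : Fin (m + 1) // (k : ℕ) < (t : ℕ) + 1} // c ≠ cp} :=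
      { toFun := fun k => ⟨⟨k.1, by have := k.2; omega⟩, fun hc => by
          have h1 : ((k.1 : Fin (m + 1)) : ℕ) = ((cT : Fin (m + 1)) : ℕ) :=
            congrArg (fun x => ((x : {k : Fin (m + 1) // (k : ℕ) < (t : ℕ) + 1}).1 : ℕ)) hc
          have h2 := k.2
          have h3 : ((cT : Fin (m + 1)) : ℕ) = (t : ℕ) := rfl
          omega⟩
        invFun := fun c => ⟨c.1.1, by
          have h1 : (c.1.1 : ℕ) < (t : ℕ) + 1 := c.1.2
          have h2 : (c.1.1 : ℕ) ≠ (t : ℕ) := hcne c.1 c.2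
          omega⟩
        left_inv := fun k => rfl
        right_inv := fun c => rfl }
    have k3 := rank_submatrix_equiv
      ((B.submatrix (id : _ → _)
        (fun c : {c : {k : Fin (m + 1) // (k : ℕ) < (t : ℕ) + 1} // c ≠ cp} =>
          (c : {k : Fin (m + 1) // (k : ℕ) < (t : ℕ) + 1}))).submatrix
        (fun i : {i : {i : Fin (m + 1) // i ∈ insert 0 S} // i ≠ i₀} =>
          (i : {i : Fin (m + 1) // i ∈ insert 0 S}))
        (id : _ → _))
      eRow eCol2
    exact k1.trans (congrArg (· + 1) (k2.symm.trans (k3.symm.trans rfl)))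
  · -- j ≥ r₁ + 1
    intro j hj
    rw [hr] at hj
    set B := Matrix.of (fun (i : {i : Fin (m + 1) // i ∈ insert 0 S})
      (k : {k : Fin (m + 1) // (k : ℕ) < j}) => A i.1 k.1) with hBdef
    have hc₀ : ((cT1 : Fin (m + 1)) : ℕ) < j := by
      show (t : ℕ) + 1 < j
      omega
    set c₀ : {k : Fin (m + 1) // (k : ℕ) < j} := ⟨cT1, hc₀⟩ with hc₀def
    have h0 : B i₀ c₀ ≠ 0 := hA0t1
    have hcol : ∀ i : {i : Fin (m + 1) // i ∈ insert 0 S}, i ≠ i₀ → B i c₀ = 0 := by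
      intro i hi
      exact hAct1 i.1 (fun h => hi (Subtype.ext h))
    have key := rank_drop_pivot_row B i₀ c₀ h0 hcol
    exact key.trans (congrArg (· + 1) (hrow j))
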